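/- The series Σ over all finite lists w = (c^1,…,c^L) of customer types (including the empty list) of ∏_{ℓ=1}^{L} λ_{c^ℓ}/μ_{S({c^1,…,c^ℓ})} converges (is finite) if and only if the stability condition holds, i.e. if and only if λ_A < μ_{S(A)} for every nonempty A ⊆ 𝒞. -/

import Mathlib

open Finset

/-- Sum of service rates over a finite set of server types. -/
def muS {S : Type*} (mu : S → ℝ) (B : Finset S) : ℝ := ∑ s ∈ B, mu s

/-- The set of server types compatible with at least one customer type in the list `w`. -/
def SsetL {C S : Type*} [Fintype S] (R : C → S → Prop) [∀ c s, Decidable (R c s)]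
    (w : List C) : Finset S := Finset.univ.filter fun s => ∃ c ∈ w, R c s

/-- The set of server types compatible with at least one customer type in `A`. -/
def SsetF {C S : Type*} [Fintype S] (R : C → S → Prop) [∀ c s, Decidable (R c s)]
    (A : Finset C) : Finset S := Finset.univ.filter fun s => ∃ c ∈ A, R c s

/-- The unnormalized stationary weight of a list of customer types:
`qweight R lam mu pre (c^1,…,c^L) = ∏_{ℓ=1}^{L} lam (c^ℓ) / μ_{S(pre ∪ {c^1,…,c^ℓ})}`;
with `pre = []` this is `∏_{ℓ=1}^{L} λ_{c^ℓ} / μ_{S({c^1,…,c^ℓ})}`. -/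
noncomputable def qweight {C S : Type*} [Fintype S] (R : C → S → Prop) [∀ c s, Decidable (R c s)]
    (lam : C → ℝ) (mu : S → ℝ) : List C → List C → ℝ
  | _, [] => 1
  | pre, c :: w =>
      (lam c / muS mu (SsetL R (pre ++ [c]))) * qweight R lam mu (pre ++ [c]) w

section Aux

variable {C S : Type*} [Fintype C] [Fintype S] [DecidableEq C]
  (R : C → S → Prop) [∀ c s, Decidable (R c s)] (lam : C → ℝ) (mu : S → ℝ)

/-- Version of `qweight` driven by the finset of already-seen customer types. -/
noncomputable def gfun : Finset C → List C → ℝ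
  | _, [] => 1
  | A, c :: w => (lam c / muS mu (SsetF R (insert c A))) * gfun (insert c A) w

lemma SsetL_eq_SsetF (w : List C) : SsetL R w = SsetF R w.toFinset := by
  ext s; simp [SsetL, SsetF]

lemma qweight_eq_gfun : ∀ (w pre : List C),
    qweight R lam mu pre w = gfun R lam mu pre.toFinset w := by
  intro w
  induction w with
  | nil => intro pre; rfl
  | cons c w ih =>
      intro pre
      have h1 : (pre ++ [c]).toFinset = insert c pre.toFinset := by
        ext x; simp [or_comm]
      rw [qweight, gfun, SsetL_eq_SsetF, h1, ih (pre ++ [c]), h1]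

lemma muS_nonneg (hmu : ∀ s, 0 < mu s) (B : Finset S) : 0 ≤ muS mu B :=
  Finset.sum_nonneg fun s _ => (hmu s).le

lemma gfun_nonneg (hlam : ∀ c, 0 < lam c) (hmu : ∀ s, 0 < mu s) :
    ∀ (w : List C) (A : Finset C), 0 ≤ gfun R lam mu A w := by
  intro w
  induction w with
  | nil => intro A; rw [gfun]; norm_num
  | cons c w ih =>
      intro A
      rw [gfun]
      exact mul_nonneg (div_nonneg (hlam c).le (muS_nonneg mu hmu _)) (ih _)

/-- The truncated "generating" sequence dominating sums over words of bounded length. -/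
noncomputable def Ffun : ℕ → Finset C → ℝ
  | 0, _ => 1
  | n + 1, A => 1 + ∑ c : C, (lam c / muS mu (SsetF R (insert c A))) * Ffun n (insert c A)

lemma muS_SsetF_pos (hmu : ∀ s, 0 < mu s)
    (hScne : ∀ c : C, (Finset.univ.filter fun s => R c s).Nonempty)
    {A : Finset C} (hA : A.Nonempty) : 0 < muS mu (SsetF R A) := by
  obtain ⟨c, hc⟩ := hA
  obtain ⟨s, hs⟩ := hScne c
  refine Finset.sum_pos (fun s _ => hmu s) ⟨s, ?_⟩
  simp only [SsetF, Finset.mem_filter, Finset.mem_univ, true_and]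
  exact ⟨c, hc, (Finset.mem_filter.1 hs).2⟩

/-- Key upper bound: the sum of weights over any finite set of words of length at most `n`
is at most `Ffun n A`. -/
lemma sum_gfun_le_Ffun [Inhabited C] (hlam : ∀ c, 0 < lam c) (hmu : ∀ s, 0 < mu s) :
    ∀ (n : ℕ) (A : Finset C) (W : Finset (List C)), (∀ w ∈ W, w.length ≤ n) →
      ∑ w ∈ W, gfun R lam mu A w ≤ Ffun R lam mu n A := by
  intro n
  induction n with
  | zero =>
      intro A W hW
      have hsub : W ⊆ {([] : List C)} := by
        intro w hw
        simp only [Finset.mem_singleton]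
        exact List.length_eq_zero_iff.1 (Nat.le_zero.1 (hW w hw))
      calc ∑ w ∈ W, gfun R lam mu A w ≤ ∑ w ∈ {([] : List C)}, gfun R lam mu A w :=
            Finset.sum_le_sum_of_subset_of_nonneg hsub
              (fun w _ _ => gfun_nonneg R lam mu hlam hmu w A)
        _ = 1 := by rw [Finset.sum_singleton]; rfl
        _ = Ffun R lam mu 0 A := rfl
  | succ n ih =>
      intro A W hW
      rw [← Finset.sum_filter_add_sum_filter_not W (fun w => w = [])]
      have h1 : ∑ w ∈ W.filter (fun w => w = []), gfun R lam mu A w ≤ 1 := by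
        have hsub : W.filter (fun w => w = []) ⊆ {([] : List C)} := by
          intro w hw
          simp only [Finset.mem_filter] at hw
          simp [hw.2]
        calc _ ≤ ∑ w ∈ {([] : List C)}, gfun R lam mu A w :=
              Finset.sum_le_sum_of_subset_of_nonneg hsub
                (fun w _ _ => gfun_nonneg R lam mu hlam hmu w A)
          _ = 1 := by rw [Finset.sum_singleton]; rfl
      set W' := W.filter (fun w => ¬ w = []) with hW'
      have h2 : ∑ w ∈ W', gfun R lam mu A w ≤
          ∑ c : C, (lam c / muS mu (SsetF R (insert c A))) * Ffun R lam mu n (insert c A) := by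
        have hfib : ∑ c ∈ (Finset.univ : Finset C),
            ∑ w ∈ W'.filter (fun w => w.head! = c), gfun R lam mu A w
            = ∑ w ∈ W', gfun R lam mu A w :=
          Finset.sum_fiberwise_of_maps_to (fun w _ => Finset.mem_univ _) _
        rw [← hfib]
        apply Finset.sum_le_sum
        intro c _
        set Wc := W'.filter (fun w => w.head! = c) with hWc
        have hcons : ∀ w ∈ Wc, w = c :: w.tail := by
          intro w hw
          simp only [hWc, hW', Finset.mem_filter] at hw
          rw [← hw.2]
          exact (List.cons_head!_tail hw.1.2).symm
        have hsum : ∑ w ∈ Wc, gfun R lam mu A w =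
            ∑ t ∈ Wc.image List.tail,
              (lam c / muS mu (SsetF R (insert c A))) * gfun R lam mu (insert c A) t := by
          rw [Finset.sum_image]
          · apply Finset.sum_congr rfl
            intro w hw
            conv_lhs => rw [hcons w hw]
            rfl
          · intro x hx y hy hxy
            rw [hcons x hx, hcons y hy, hxy]
        rw [hsum, ← Finset.mul_sum]
        have hlen : ∀ t ∈ Wc.image List.tail, t.length ≤ n := by
          intro t ht
          obtain ⟨w, hw, rfl⟩ := Finset.mem_image.1 ht
          have : w.length ≤ n + 1 := by
            simp only [hWc, hW', Finset.mem_filter] at hw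
            exact hW w hw.1.1
          have hne : w ≠ [] := by
            simp only [hWc, hW', Finset.mem_filter] at hw
            exact hw.1.2
          cases w with
          | nil => exact absurd rfl hne
          | cons a l => simpa using Nat.succ_le_succ_iff.1 this
        exact mul_le_mul_of_nonneg_left
          (ih (insert c A) (Wc.image List.tail) hlen)
          (div_nonneg (hlam c).le (muS_nonneg mu hmu _))
      calc _ ≤ 1 + ∑ c : C, (lam c / muS mu (SsetF R (insert c A))) * Ffun R lam mu n (insert c A) :=
            add_le_add h1 h2
        _ = Ffun R lam mu (n + 1) A := rfl

/-- The dominating constant, defined by downward recursion on the set of seen customer types. -/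
noncomputable def Mfun (A : Finset C) : ℝ :=
  (1 + ∑ c ∈ Aᶜ.attach, (lam c.1 / muS mu (SsetF R (insert c.1 A))) * Mfun (insert c.1 A)) /
    (1 - (∑ c ∈ A, lam c) / muS mu (SsetF R A))
termination_by Aᶜ.card
decreasing_by
  have hc : c.1 ∈ Aᶜ := c.2
  rw [Finset.compl_insert]
  exact Finset.card_erase_lt_of_mem hc

lemma rho_lt_one (hlam : ∀ c, 0 < lam c) (hmu : ∀ s, 0 < mu s)
    (hScne : ∀ c : C, (Finset.univ.filter fun s => R c s).Nonempty)
    (hst : ∀ A : Finset C, A.Nonempty → (∑ c ∈ A, lam c) < muS mu (SsetF R A))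
    (A : Finset C) : (∑ c ∈ A, lam c) / muS mu (SsetF R A) < 1 := by
  rcases A.eq_empty_or_nonempty with rfl | hA
  · simp
  · exact (div_lt_one (muS_SsetF_pos R mu hmu hScne hA)).2 (hst A hA)

lemma rho_nonneg (hlam : ∀ c, 0 < lam c) (hmu : ∀ s, 0 < mu s)
    (A : Finset C) : 0 ≤ (∑ c ∈ A, lam c) / muS mu (SsetF R A) :=
  div_nonneg (Finset.sum_nonneg fun c _ => (hlam c).le) (muS_nonneg mu hmu _)

lemma one_le_Mfun (hlam : ∀ c, 0 < lam c) (hmu : ∀ s, 0 < mu s)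
    (hScne : ∀ c : C, (Finset.univ.filter fun s => R c s).Nonempty)
    (hst : ∀ A : Finset C, A.Nonempty → (∑ c ∈ A, lam c) < muS mu (SsetF R A)) :
    ∀ (n : ℕ) (A : Finset C), Aᶜ.card ≤ n → 1 ≤ Mfun R lam mu A := by
  intro n
  induction n with
  | zero =>
      intro A hA
      have hAc : Aᶜ = ∅ := Finset.card_eq_zero.1 (Nat.le_zero.1 hA)
      rw [Mfun]
      have hden : 0 < 1 - (∑ c ∈ A, lam c) / muS mu (SsetF R A) := by
        linarith [rho_lt_one R lam mu hlam hmu hScne hst A]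
      rw [hAc]
      simp only [Finset.attach_empty, Finset.sum_empty, add_zero]
      rw [le_div_iff₀ hden]
      have := rho_nonneg R lam mu hlam hmu A
      linarith
  | succ n ih =>
      intro A hA
      rw [Mfun]
      have hden : 0 < 1 - (∑ c ∈ A, lam c) / muS mu (SsetF R A) := by
        linarith [rho_lt_one R lam mu hlam hmu hScne hst A]
      rw [le_div_iff₀ hden]
      have hsum : 0 ≤ ∑ c ∈ Aᶜ.attach,
          (lam c.1 / muS mu (SsetF R (insert c.1 A))) * Mfun R lam mu (insert c.1 A) := by
        apply Finset.sum_nonneg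
        intro c _
        have hc : c.1 ∉ A := Finset.mem_compl.1 c.2
        have hcard : (insert c.1 A)ᶜ.card ≤ n := by
          rw [Finset.compl_insert]
          have := Finset.card_erase_lt_of_mem c.2
          omega
        have h1 : (1 : ℝ) ≤ Mfun R lam mu (insert c.1 A) := ih _ hcard
        exact mul_nonneg (div_nonneg (hlam c.1).le (muS_nonneg mu hmu _)) (by linarith)
      have := rho_nonneg R lam mu hlam hmu A
      linarith

lemma Mfun_fixed (hlam : ∀ c, 0 < lam c) (hmu : ∀ s, 0 < mu s)
    (hScne : ∀ c : C, (Finset.univ.filter fun s => R c s).Nonempty)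
    (hst : ∀ A : Finset C, A.Nonempty → (∑ c ∈ A, lam c) < muS mu (SsetF R A))
    (A : Finset C) :
    1 + ∑ c : C, (lam c / muS mu (SsetF R (insert c A))) * Mfun R lam mu (insert c A)
      = Mfun R lam mu A := by
  have hden : 0 < 1 - (∑ c ∈ A, lam c) / muS mu (SsetF R A) := by
    linarith [rho_lt_one R lam mu hlam hmu hScne hst A]
  set T := ∑ c ∈ Aᶜ.attach,
    (lam c.1 / muS mu (SsetF R (insert c.1 A))) * Mfun R lam mu (insert c.1 A) with hT
  set ρ := (∑ c ∈ A, lam c) / muS mu (SsetF R A) with hρ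
  have hM : Mfun R lam mu A = (1 + T) / (1 - ρ) := by rw [Mfun]
  have hMkey : Mfun R lam mu A * (1 - ρ) = 1 + T := by
    rw [hM]; field_simp
  have hsplit : ∑ c : C, (lam c / muS mu (SsetF R (insert c A))) * Mfun R lam mu (insert c A)
      = ρ * Mfun R lam mu A + T := by
    rw [← Finset.sum_add_sum_compl A]
    congr 1
    · have : ∀ c ∈ A, (lam c / muS mu (SsetF R (insert c A))) * Mfun R lam mu (insert c A)
          = (lam c / muS mu (SsetF R A)) * Mfun R lam mu A := by
        intro c hc
        rw [Finset.insert_eq_self.2 hc]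
      rw [Finset.sum_congr rfl this, ← Finset.sum_mul, ← Finset.sum_div, hρ]
    · rw [hT, ← Finset.sum_attach Aᶜ
        (fun c => (lam c / muS mu (SsetF R (insert c A))) * Mfun R lam mu (insert c A))]
  rw [hsplit]
  have hexp : Mfun R lam mu A - Mfun R lam mu A * ρ = 1 + T := by
    rw [← hMkey]; ring
  linarith [hexp]

lemma Ffun_le_Mfun (hlam : ∀ c, 0 < lam c) (hmu : ∀ s, 0 < mu s)
    (hScne : ∀ c : C, (Finset.univ.filter fun s => R c s).Nonempty)
    (hst : ∀ A : Finset C, A.Nonempty → (∑ c ∈ A, lam c) < muS mu (SsetF R A)) :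
    ∀ (n : ℕ) (A : Finset C), Ffun R lam mu n A ≤ Mfun R lam mu A := by
  intro n
  induction n with
  | zero =>
      intro A
      exact one_le_Mfun R lam mu hlam hmu hScne hst Aᶜ.card A le_rfl
  | succ n ih =>
      intro A
      rw [← Mfun_fixed R lam mu hlam hmu hScne hst A]
      show 1 + _ ≤ 1 + _
      apply add_le_add_right
      apply Finset.sum_le_sum
      intro c _
      exact mul_le_mul_of_nonneg_left (ih (insert c A))
        (div_nonneg (hlam c).le (muS_nonneg mu hmu _))

/-- Lower bound on weights of words all of whose letters lie in `A`. -/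
lemma gfun_lower (hlam : ∀ c, 0 < lam c) (hmu : ∀ s, 0 < mu s)
    (hScne : ∀ c : C, (Finset.univ.filter fun s => R c s).Nonempty) (A : Finset C) :
    ∀ (w : List C) (B : Finset C), (∀ c ∈ w, c ∈ A) → B ⊆ A →
      (w.map fun c => lam c / muS mu (SsetF R A)).prod ≤ gfun R lam mu B w := by
  intro w
  induction w with
  | nil => intro B _ _; simp [gfun]
  | cons c w ih =>
      intro B hw hB
      have hcA : c ∈ A := hw c List.mem_cons_self
      have hBA : insert c B ⊆ A := Finset.insert_subset hcA hB
      have hpos : 0 < muS mu (SsetF R (insert c B)) :=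
        muS_SsetF_pos R mu hmu hScne ⟨c, Finset.mem_insert_self c B⟩
      have hmono : muS mu (SsetF R (insert c B)) ≤ muS mu (SsetF R A) := by
        apply Finset.sum_le_sum_of_subset_of_nonneg
        · intro s hs
          simp only [SsetF, Finset.mem_filter, Finset.mem_univ, true_and] at hs ⊢
          obtain ⟨c', hc', hR⟩ := hs
          exact ⟨c', hBA hc', hR⟩
        · intro s _ _; exact (hmu s).le
      have h1 : lam c / muS mu (SsetF R A) ≤ lam c / muS mu (SsetF R (insert c B)) := by
        apply div_le_div_of_nonneg_left (hlam c).le hpos hmono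
      rw [List.map_cons, List.prod_cons, gfun]
      apply mul_le_mul h1 (ih (insert c B) (fun c' hc' => hw c' (List.mem_cons_of_mem c hc')) hBA)
      · apply List.prod_nonneg
        intro x hx
        obtain ⟨c', _, rfl⟩ := List.mem_map.1 hx
        exact div_nonneg (hlam c').le (muS_nonneg mu hmu _)
      · exact div_nonneg (hlam c).le (muS_nonneg mu hmu _)

end Aux

/-- the series of the unnormalized weights over all finite lists of
customer types is summable if and only if the stability condition
`λ_A < μ_{S(A)}` holds for every nonempty `A ⊆ 𝒞`. -/
theorem stmt2 {C S : Type*} [Fintype C] [Fintype S] [Nonempty C] [Nonempty S]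
    (R : C → S → Prop) [∀ c s, Decidable (R c s)]
    (lam : C → ℝ) (mu : S → ℝ)
    (hlam : ∀ c, 0 < lam c) (hmu : ∀ s, 0 < mu s)
    (hScne : ∀ c : C, (Finset.univ.filter fun s => R c s).Nonempty) :
    Summable (fun w : List C => qweight R lam mu [] w) ↔
      ∀ A : Finset C, A.Nonempty → (∑ c ∈ A, lam c) < muS mu (SsetF R A) := by
  letI : DecidableEq C := Classical.decEq C
  letI : Inhabited C := Classical.inhabited_of_nonempty inferInstance
  have hq : ∀ w : List C, qweight R lam mu [] w = gfun R lam mu ∅ w := by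
    intro w
    rw [qweight_eq_gfun]
    rfl
  constructor
  · -- Summable → stability
    intro hsummable A hA
    by_contra hcon
    push_neg at hcon
    have hμpos : 0 < muS mu (SsetF R A) := muS_SsetF_pos R mu hmu hScne hA
    set μA := muS mu (SsetF R A) with hμA
    -- words with letters in A of length L
    set T : ℕ → Finset (List C) := fun L =>
      (Fintype.piFinset fun _ : Fin L => A).image List.ofFn with hT
    have hTsum : ∀ L : ℕ, (1 : ℝ) ≤ ∑ w ∈ T L, qweight R lam mu [] w := by
      intro L
      have himg : ∑ w ∈ T L, qweight R lam mu [] w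
          = ∑ f ∈ Fintype.piFinset (fun _ : Fin L => A),
              qweight R lam mu [] (List.ofFn f) := by
        rw [hT]
        exact Finset.sum_image fun x _ y _ h => List.ofFn_injective h
      have hlow : ∀ f ∈ Fintype.piFinset (fun _ : Fin L => A),
          ∏ i : Fin L, (lam (f i) / μA) ≤ qweight R lam mu [] (List.ofFn f) := by
        intro f hf
        rw [hq]
        have hmemA : ∀ c ∈ List.ofFn f, c ∈ A := by
          intro c hc
          obtain ⟨i, rfl⟩ := List.mem_ofFn.1 hc
          exact Fintype.mem_piFinset.1 hf i
        have := gfun_lower R lam mu hlam hmu hScne A (List.ofFn f) ∅ hmemA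
          (Finset.empty_subset A)
        rwa [List.map_ofFn, Fin.prod_ofFn] at this
      have hgeom : ((∑ c ∈ A, lam c) / μA) ^ L
          = ∑ f ∈ Fintype.piFinset (fun _ : Fin L => A), ∏ i : Fin L, (lam (f i) / μA) := by
        rw [← Finset.prod_univ_sum (fun _ : Fin L => A) (fun _ c => lam c / μA)]
        simp [Finset.sum_div]
      have hratio : (1 : ℝ) ≤ (∑ c ∈ A, lam c) / μA := (one_le_div hμpos).2 hcon
      calc (1 : ℝ) ≤ ((∑ c ∈ A, lam c) / μA) ^ L := one_le_pow₀ hratio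
        _ = ∑ f ∈ Fintype.piFinset (fun _ : Fin L => A), ∏ i : Fin L, (lam (f i) / μA) :=
            hgeom
        _ ≤ ∑ f ∈ Fintype.piFinset (fun _ : Fin L => A),
              qweight R lam mu [] (List.ofFn f) := Finset.sum_le_sum hlow
        _ = ∑ w ∈ T L, qweight R lam mu [] w := himg.symm
    have hnonneg : ∀ w : List C, 0 ≤ qweight R lam mu [] w := by
      intro w; rw [hq]; exact gfun_nonneg R lam mu hlam hmu w ∅
    obtain ⟨N, hN⟩ := exists_nat_gt (∑' w : List C, qweight R lam mu [] w)
    have hdisj : Set.PairwiseDisjoint ↑(Finset.range N) T := by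
      intro i _ j _ hij
      apply Finset.disjoint_left.2
      intro w hwi hwj
      apply hij
      rw [hT] at hwi hwj
      obtain ⟨f, _, rfl⟩ := Finset.mem_image.1 hwi
      obtain ⟨g, _, hg⟩ := Finset.mem_image.1 hwj
      have h1 : (List.ofFn g).length = j := List.length_ofFn
      rw [hg, List.length_ofFn] at h1
      exact h1
    have hbig : (N : ℝ) ≤ ∑ w ∈ (Finset.range N).biUnion T, qweight R lam mu [] w := by
      rw [Finset.sum_biUnion hdisj]
      calc (N : ℝ) = ∑ _L ∈ Finset.range N, (1 : ℝ) := by simp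
        _ ≤ ∑ L ∈ Finset.range N, ∑ w ∈ T L, qweight R lam mu [] w :=
            Finset.sum_le_sum fun L _ => hTsum L
    have hle : ∑ w ∈ (Finset.range N).biUnion T, qweight R lam mu [] w
        ≤ ∑' w : List C, qweight R lam mu [] w :=
      Summable.sum_le_tsum _ (fun w _ => hnonneg w) hsummable
    linarith
  · -- stability → Summable
    intro hst
    apply summable_of_sum_le (c := Mfun R lam mu (∅ : Finset C))
    · intro w
      show (0 : ℝ) ≤ qweight R lam mu [] w
      rw [hq]; exact gfun_nonneg R lam mu hlam hmu w ∅
    · intro W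
      set n := W.sup List.length with hn
      have hlen : ∀ w ∈ W, w.length ≤ n := fun w hw => Finset.le_sup hw
      calc ∑ w ∈ W, qweight R lam mu [] w = ∑ w ∈ W, gfun R lam mu ∅ w :=
            Finset.sum_congr rfl fun w _ => hq w
        _ ≤ Ffun R lam mu n ∅ := sum_gfun_le_Ffun R lam mu hlam hmu n ∅ W hlen
        _ ≤ Mfun R lam mu ∅ := Ffun_le_Mfun R lam mu hlam hmu hScne hst n ∅
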